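/- If sequences (a_n) and (b_n) both satisfy ∑|a_n|/√n < ∞, ∑|b_n|/√n < ∞, and their Dirichlet convolution equals δ (δ_1 = 1, δ_n = 0 for n > 1), then the bounded operators T(a_n) and T(b_n) on L²[0,∞) satisfy T(b_n)∘T(a_n) = Id. -/

import Mathlib

open MeasureTheory Set Filter
open scoped ENNReal NNReal

noncomputable def ν : Measure ℝ := volume.restrict (Set.Ioi (0:ℝ))

/-- `T(a)f(x) = ∑_{n≥1} a_n f(n x)`. -/
noncomputable def Tfun (a : ℕ → ℂ) (f : ℝ → ℂ) : ℝ → ℂ :=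
  fun x => ∑' n : ℕ, a (n + 1) * f ((n + 1) * x)


lemma lintegral_dilate (k : ℕ) (hk : k ≠ 0) (g : ℝ → ℝ≥0∞) (hg : Measurable g) :
    ∫⁻ x, g ((k : ℝ) * x) ∂ν = ENNReal.ofReal (1 / Real.sqrt k) ^ 2 * ∫⁻ x, g x ∂ν := by
  have hk0 : (0:ℝ) < (k:ℝ) := by exact_mod_cast Nat.pos_of_ne_zero hk
  have hkne : (k:ℝ) ≠ 0 := ne_of_gt hk0
  have hpre : (fun x : ℝ => (k:ℝ) * x) ⁻¹' (Set.Ioi 0) = Set.Ioi 0 := by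
    ext x
    simp only [Set.mem_preimage, Set.mem_Ioi]
    exact ⟨fun h => by nlinarith, fun h => mul_pos hk0 h⟩
  have hmap : Measure.map (fun x : ℝ => (k:ℝ) * x) ν = ENNReal.ofReal |((k:ℝ))⁻¹| • ν := by
    unfold ν
    rw [← hpre, ← Measure.restrict_map (measurable_const_mul _) measurableSet_Ioi,
      Real.map_volume_mul_left hkne, Measure.restrict_smul, hpre]
  have hcoef : ENNReal.ofReal |((k:ℝ))⁻¹| = ENNReal.ofReal (1 / Real.sqrt k) ^ 2 := by
    rw [← ENNReal.ofReal_pow (by positivity)]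
    congr 1
    rw [abs_of_pos (by positivity)]
    rw [div_pow, one_pow, Real.sq_sqrt hk0.le, one_div]
  calc ∫⁻ x, g ((k : ℝ) * x) ∂ν = ∫⁻ y, g y ∂(Measure.map (fun x : ℝ => (k:ℝ) * x) ν) := by
        rw [lintegral_map hg (measurable_const_mul _)]
    _ = ENNReal.ofReal (1 / Real.sqrt k) ^ 2 * ∫⁻ x, g x ∂ν := by
        rw [hmap, hcoef, lintegral_smul_measure, smul_eq_mul]

noncomputable def wgt (n : ℕ) : ℝ≥0∞ := ENNReal.ofReal (1 / Real.sqrt n)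

lemma wgt_mul (m n : ℕ) : wgt (m * n) = wgt m * wgt n := by
  unfold wgt
  rw [← ENNReal.ofReal_mul (by positivity)]
  congr 1
  rw [Nat.cast_mul, Real.sqrt_mul (Nat.cast_nonneg m)]
  rw [one_div, one_div, one_div, mul_inv]

/-- a.e. finiteness of the double sum -/
lemma ae_fin (a b : ℕ → ℂ) (f : ℝ → ℂ) (hmf : Measurable f) (hf : MemLp f 2 ν)
    (ha : Summable fun n : ℕ => ‖a (n + 1)‖ / Real.sqrt (n + 1))
    (hb : Summable fun n : ℕ => ‖b (n + 1)‖ / Real.sqrt (n + 1)) :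
    ∀ᵐ x ∂ν, (∑' p : ℕ × ℕ,
      ((‖b (p.1+1)‖₊ * ‖a (p.2+1)‖₊ * ‖f ((((p.1+1)*(p.2+1) : ℕ) : ℝ) * x)‖₊ : ℝ≥0) : ℝ≥0∞)) ≠ ∞ := by
  classical
  set J : ℝ≥0∞ := ∫⁻ x, (‖f x‖₊ : ℝ≥0∞) ^ (2:ℝ) ∂ν with hJdef
  have hJ : J ≠ ∞ := by
    have h2 := hf.2
    rw [eLpNorm_eq_lintegral_rpow_enorm_toReal (by norm_num) (by norm_num)] at h2
    simp only [ENNReal.toReal_ofNat, enorm_eq_nnnorm] at h2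
    intro hh
    rw [hJdef] at hh
    rw [hh] at h2
    simp [ENNReal.top_rpow_of_pos (by norm_num : (0:ℝ) < 1/2)] at h2
  set t : ℕ × ℕ → ℝ → ℝ≥0∞ := fun p x =>
    ((‖b (p.1+1)‖₊ * ‖a (p.2+1)‖₊ * ‖f ((((p.1+1)*(p.2+1) : ℕ) : ℝ) * x)‖₊ : ℝ≥0) : ℝ≥0∞) with htdef
  have ht : ∀ p, Measurable (t p) := by
    intro p
    apply Measurable.coe_nnreal_ennreal
    exact (measurable_const.mul ((measurable_nnnorm).comp (hmf.comp (measurable_const_mul _))))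
  -- rpow square helper
  have hsq : ∀ u v : ℝ≥0∞, (u ^ (2:ℝ) * v) ^ ((1:ℝ)/2) = u * v ^ ((1:ℝ)/2) := by
    intro u v
    rw [ENNReal.mul_rpow_of_nonneg _ _ (by norm_num), ← ENNReal.rpow_mul]
    norm_num
  -- per term integral
  have hterm : ∀ p : ℕ × ℕ, (∫⁻ x, t p x ^ (2:ℝ) ∂ν) ^ ((1:ℝ)/2) =
      ((‖b (p.1+1)‖₊ * ‖a (p.2+1)‖₊ : ℝ≥0) : ℝ≥0∞) * wgt ((p.1+1)*(p.2+1)) * J ^ ((1:ℝ)/2) := by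
    intro p
    set cp : ℝ≥0∞ := ((‖b (p.1+1)‖₊ * ‖a (p.2+1)‖₊ : ℝ≥0) : ℝ≥0∞) with hcp
    have h1 : ∀ x, t p x = cp * (‖f ((((p.1+1)*(p.2+1) : ℕ) : ℝ) * x)‖₊ : ℝ≥0∞) := by
      intro x; rw [htdef, hcp]; push_cast; ring
    have h2 : ∫⁻ x, t p x ^ (2:ℝ) ∂ν
        = cp ^ (2:ℝ) * ∫⁻ x, ((‖f ((((p.1+1)*(p.2+1) : ℕ) : ℝ) * x)‖₊ : ℝ≥0∞)) ^ (2:ℝ) ∂ν := by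
      simp_rw [h1, ENNReal.mul_rpow_of_nonneg _ _ (by norm_num : (0:ℝ) ≤ 2)]
      rw [lintegral_const_mul]
      exact ((measurable_nnnorm).comp (hmf.comp (measurable_const_mul _))).coe_nnreal_ennreal.pow_const _
    have h3 : ∫⁻ x, ((‖f ((((p.1+1)*(p.2+1) : ℕ) : ℝ) * x)‖₊ : ℝ≥0∞)) ^ (2:ℝ) ∂ν
        = wgt ((p.1+1)*(p.2+1)) ^ 2 * J := by
      rw [hJdef]
      exact lintegral_dilate _ (by positivity) (fun y => (‖f y‖₊ : ℝ≥0∞) ^ (2:ℝ))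
        ((measurable_nnnorm.comp hmf).coe_nnreal_ennreal.pow_const _)
    rw [h2, h3]
    rw [show wgt ((p.1+1)*(p.2+1)) ^ 2 = wgt ((p.1+1)*(p.2+1)) ^ (2:ℝ) by
      rw [← ENNReal.rpow_natCast]; norm_num]
    rw [← mul_assoc, ← ENNReal.mul_rpow_of_nonneg _ _ (by norm_num : (0:ℝ) ≤ 2)]
    rw [hsq]
  -- finiteness of the weight sum
  have hfac : ∀ g : ℕ → ℂ, Summable (fun n : ℕ => ‖g (n + 1)‖ / Real.sqrt (n + 1)) →
      (∑' m : ℕ, (‖g (m+1)‖₊ : ℝ≥0∞) * wgt (m+1)) ≠ ∞ := by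
    intro g hg
    have heq : ∀ m : ℕ, (‖g (m+1)‖₊ : ℝ≥0∞) * wgt (m+1)
        = ENNReal.ofReal (‖g (m + 1)‖ / Real.sqrt (m + 1)) := by
      intro m
      rw [← enorm_eq_nnnorm, ← ofReal_norm]
      unfold wgt
      rw [← ENNReal.ofReal_mul (norm_nonneg _)]
      congr 1
      rw [mul_one_div]
      norm_num
    simp_rw [heq]
    rw [← ENNReal.ofReal_tsum_of_nonneg (fun m => by positivity) hg]
    exact ENNReal.ofReal_ne_top
  set W : ℕ × ℕ → ℝ≥0∞ := fun p =>
    ((‖b (p.1+1)‖₊ * ‖a (p.2+1)‖₊ : ℝ≥0) : ℝ≥0∞) * wgt ((p.1+1)*(p.2+1)) with hWdef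
  have hWsum : (∑' p : ℕ × ℕ, W p) ≠ ∞ := by
    have hWeq : ∀ p : ℕ × ℕ, W p = ((‖b (p.1+1)‖₊ : ℝ≥0∞) * wgt (p.1+1)) *
        ((‖a (p.2+1)‖₊ : ℝ≥0∞) * wgt (p.2+1)) := by
      intro p
      rw [hWdef]
      simp only []
      rw [wgt_mul]
      push_cast
      ring
    simp_rw [hWeq]
    rw [ENNReal.tsum_prod']
    have : ∀ m : ℕ, (∑' n : ℕ, ((‖b (m+1)‖₊ : ℝ≥0∞) * wgt (m+1)) *
        ((‖a (n+1)‖₊ : ℝ≥0∞) * wgt (n+1)))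
        = ((‖b (m+1)‖₊ : ℝ≥0∞) * wgt (m+1)) * (∑' n : ℕ, (‖a (n+1)‖₊ : ℝ≥0∞) * wgt (n+1)) :=
      fun m => ENNReal.tsum_mul_left
    simp_rw [this]
    rw [ENNReal.tsum_mul_right]
    exact ENNReal.mul_ne_top (hfac b hb) (hfac a ha)
  set C : ℝ≥0∞ := (∑' p : ℕ × ℕ, W p) * J ^ ((1:ℝ)/2) with hCdef
  have hC : C ≠ ∞ := ENNReal.mul_ne_top hWsum (ENNReal.rpow_ne_top_of_nonneg (by norm_num) hJ)
  -- partial sums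
  set e : ℕ ≃ ℕ × ℕ := (Denumerable.eqv (ℕ × ℕ)).symm with hedef
  set S : ℕ → ℝ → ℝ≥0∞ := fun N x => ∑ i ∈ Finset.range N, t (e i) x with hSdef
  have hSmeas : ∀ N, Measurable (S N) := fun N => Finset.measurable_sum _ (fun i _ => ht (e i))
  have hmink : ∀ N, (∫⁻ x, S N x ^ (2:ℝ) ∂ν) ^ ((1:ℝ)/2)
      ≤ ∑ i ∈ Finset.range N, (∫⁻ x, t (e i) x ^ (2:ℝ) ∂ν) ^ ((1:ℝ)/2) := by
    intro N
    induction N with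
    | zero =>
      simp [hSdef, ENNReal.zero_rpow_of_pos]
    | succ N ihN =>
      have hstep : (∫⁻ x, S (N+1) x ^ (2:ℝ) ∂ν) ^ ((1:ℝ)/2)
          ≤ (∫⁻ x, S N x ^ (2:ℝ) ∂ν) ^ ((1:ℝ)/2) + (∫⁻ x, t (e N) x ^ (2:ℝ) ∂ν) ^ ((1:ℝ)/2) := by
        have : S (N+1) = S N + t (e N) := by
          funext x
          simp [hSdef, Finset.sum_range_succ]
        rw [this]
        exact ENNReal.lintegral_Lp_add_le (hSmeas N).aemeasurable (ht (e N)).aemeasurable one_le_two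
      rw [Finset.sum_range_succ]
      exact hstep.trans (add_le_add_left ihN _)
  have hSbound : ∀ N, ∫⁻ x, S N x ^ (2:ℝ) ∂ν ≤ C ^ (2:ℝ) := by
    intro N
    have h1 : (∫⁻ x, S N x ^ (2:ℝ) ∂ν) ^ ((1:ℝ)/2) ≤ C := by
      refine (hmink N).trans ?_
      calc ∑ i ∈ Finset.range N, (∫⁻ x, t (e i) x ^ (2:ℝ) ∂ν) ^ ((1:ℝ)/2)
          = ∑ i ∈ Finset.range N, W (e i) * J ^ ((1:ℝ)/2) := by
            refine Finset.sum_congr rfl fun i _ => ?_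
            rw [hterm (e i)]
        _ = (∑ i ∈ Finset.range N, W (e i)) * J ^ ((1:ℝ)/2) := by rw [Finset.sum_mul]
        _ ≤ (∑' p : ℕ × ℕ, W p) * J ^ ((1:ℝ)/2) := by
            refine mul_le_mul_left ?_ _
            calc ∑ i ∈ Finset.range N, W (e i) ≤ ∑' i : ℕ, W (e i) := ENNReal.sum_le_tsum _
              _ = ∑' p : ℕ × ℕ, W p := e.tsum_eq W
        _ = C := rfl
    have h2 : ∫⁻ x, S N x ^ (2:ℝ) ∂ν = ((∫⁻ x, S N x ^ (2:ℝ) ∂ν) ^ ((1:ℝ)/2)) ^ (2:ℝ) := by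
      rw [← ENNReal.rpow_mul]; norm_num
    rw [h2]
    exact ENNReal.rpow_le_rpow h1 (by norm_num)
  -- Fatou
  set A : ℝ → ℝ≥0∞ := fun x => ∑' p : ℕ × ℕ, t p x with hAdef
  have hAmeas : Measurable A := Measurable.ennreal_tsum ht
  have hAtend : ∀ x, Tendsto (fun N => S N x) atTop (nhds (A x)) := by
    intro x
    have : A x = ∑' i : ℕ, t (e i) x := (e.tsum_eq (fun p => t p x)).symm
    rw [this]
    exact ENNReal.tendsto_nat_tsum _
  have hA2int : ∫⁻ x, A x ^ (2:ℝ) ∂ν ≤ C ^ (2:ℝ) := by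
    have hA2 : ∀ x, A x ^ (2:ℝ) = liminf (fun N => S N x ^ (2:ℝ)) atTop := by
      intro x
      have : Tendsto (fun N => S N x ^ (2:ℝ)) atTop (nhds (A x ^ (2:ℝ))) :=
        (ENNReal.continuous_rpow_const.tendsto _).comp (hAtend x)
      exact this.liminf_eq.symm
    calc ∫⁻ x, A x ^ (2:ℝ) ∂ν = ∫⁻ x, liminf (fun N => S N x ^ (2:ℝ)) atTop ∂ν := by
          simp_rw [hA2]
      _ ≤ liminf (fun N => ∫⁻ x, S N x ^ (2:ℝ) ∂ν) atTop :=
          lintegral_liminf_le (fun N => (hSmeas N).pow_const _)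
      _ ≤ liminf (fun _ : ℕ => C ^ (2:ℝ)) atTop :=
          liminf_le_liminf (Eventually.of_forall hSbound)
      _ = C ^ (2:ℝ) := liminf_const _
  have hC2 : C ^ (2:ℝ) ≠ ∞ := ENNReal.rpow_ne_top_of_nonneg (by norm_num) hC
  have hae : ∀ᵐ x ∂ν, A x ^ (2:ℝ) < ∞ :=
    ae_lt_top (hAmeas.pow_const _) (lt_of_le_of_lt hA2int (lt_top_iff_ne_top.mpr hC2)).ne
  filter_upwards [hae] with x hx
  intro hxtop
  have : A x = ∞ := hxtop
  rw [this, ENNReal.top_rpow_of_pos (by norm_num : (0:ℝ) < 2)] at hx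
  exact absurd hx (lt_irrefl _)

lemma pointwise_key (a b : ℕ → ℂ) (f : ℝ → ℂ) (x : ℝ)
    (hconv : ∀ n : ℕ, 1 ≤ n →
      (∑ d ∈ n.divisors, a d * b (n / d)) = if n = 1 then 1 else 0)
    (hsum : Summable (fun p : ℕ × ℕ =>
      (‖b (p.1+1)‖₊ * ‖a (p.2+1)‖₊ * ‖f ((((p.1+1)*(p.2+1) : ℕ) : ℝ) * x)‖₊ : ℝ≥0))) :
    Tfun b (Tfun a f) x = f x := by
  classical
  set F : ℕ × ℕ → ℂ := fun p =>
    b (p.1 + 1) * (a (p.2 + 1) * f (((p.2 : ℝ) + 1) * (((p.1 : ℝ) + 1) * x))) with hFdef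
  have hFnorm : ∀ p : ℕ × ℕ, ‖F p‖₊ =
      ‖b (p.1+1)‖₊ * ‖a (p.2+1)‖₊ * ‖f ((((p.1+1)*(p.2+1) : ℕ) : ℝ) * x)‖₊ := by
    intro p
    have harg : ((p.2 : ℝ) + 1) * (((p.1 : ℝ) + 1) * x) = (((p.1+1)*(p.2+1) : ℕ) : ℝ) * x := by
      push_cast; ring
    rw [hFdef]
    simp only [harg, nnnorm_mul]
    ring
  have hF : Summable F := by
    apply Summable.of_nnnorm
    simp_rw [hFnorm]
    exact hsum
  -- step 1 : Tfun b (Tfun a f) x = ∑' p, F p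
  have h1 : Tfun b (Tfun a f) x = ∑' p : ℕ × ℕ, F p := by
    rw [Summable.tsum_prod' hF hF.prod_factor]
    unfold Tfun
    congr 1
    funext m
    rw [hFdef]
    simp only []
    rw [tsum_mul_left]
  -- step 2 : reindex to G over all of ℕ × ℕ
  set G : ℕ × ℕ → ℂ := fun p =>
    if p.1 = 0 ∨ p.2 = 0 then 0 else b p.1 * a p.2 * f (((p.1 * p.2 : ℕ) : ℝ) * x) with hGdef
  have hinj : Function.Injective (fun p : ℕ × ℕ => (p.1 + 1, p.2 + 1)) := by
    intro p q h
    simp only [Prod.mk.injEq, add_left_inj] at h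
    exact Prod.ext h.1 h.2
  have hGF : ∀ p : ℕ × ℕ, G ((p.1 + 1, p.2 + 1)) = F p := by
    intro p
    rw [hGdef, hFdef]
    simp only [Nat.succ_ne_zero, or_self, if_false]
    have harg : (((p.1+1) * (p.2+1) : ℕ) : ℝ) * x = ((p.2 : ℝ) + 1) * (((p.1 : ℝ) + 1) * x) := by
      push_cast; ring
    rw [harg]
    ring
  have hvanish : ∀ q ∉ Set.range (fun p : ℕ × ℕ => (p.1 + 1, p.2 + 1)), G q = 0 := by
    rintro ⟨q1, q2⟩ hq
    by_contra hne
    have h1 : q1 ≠ 0 := by rintro rfl; apply hne; simp [hGdef]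
    have h2 : q2 ≠ 0 := by rintro rfl; apply hne; simp [hGdef]
    exact hq ⟨(q1 - 1, q2 - 1), by simp only [Prod.mk.injEq]; omega⟩
  have hsupp : Function.support G ⊆ Set.range (fun p : ℕ × ℕ => (p.1 + 1, p.2 + 1)) := by
    intro q hq
    by_contra hmem
    exact (Function.mem_support.mp hq) (hvanish q hmem)
  have h2 : ∑' p : ℕ × ℕ, F p = ∑' q : ℕ × ℕ, G q := by
    rw [← hinj.tsum_eq hsupp]
    exact tsum_congr fun p => (hGF p).symm
  have hG : Summable G :=
    (hinj.summable_iff hvanish).mp ((summable_congr hGF).mpr hF)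
  -- step 3 : sum fiberwise over the product value
  have h3 : ∑' q : ℕ × ℕ, G q =
      ∑' k : ℕ, ∑' q : (fun p : ℕ × ℕ => p.1 * p.2) ⁻¹' {k}, G q :=
    (hG.hasSum.tsum_fiberwise (fun p => p.1 * p.2)).tsum_eq.symm
  have hfib : ∀ k : ℕ, (∑' q : (fun p : ℕ × ℕ => p.1 * p.2) ⁻¹' {k}, G q)
      = (if k = 1 then 1 else 0) * f ((k : ℝ) * x) := by
    intro k
    rcases eq_or_ne k 0 with rfl | hk
    · have hz : ∀ q : (fun p : ℕ × ℕ => p.1 * p.2) ⁻¹' {(0:ℕ)}, G q.val = 0 := by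
        rintro ⟨⟨q1, q2⟩, hq⟩
        have hq0 : q1 * q2 = 0 := hq
        rcases Nat.mul_eq_zero.mp hq0 with h | h
        · simp [hGdef, h]
        · simp [hGdef, h]
      rw [tsum_congr hz, tsum_zero]
      simp
    · have hset : (fun p : ℕ × ℕ => p.1 * p.2) ⁻¹' {k} = (k.divisorsAntidiagonal : Set (ℕ × ℕ)) := by
        ext p
        simp [Nat.mem_divisorsAntidiagonal, hk]
      rw [hset, Finset.tsum_subtype' k.divisorsAntidiagonal G]
      have hGval : ∀ p ∈ k.divisorsAntidiagonal, G p = b p.1 * a p.2 * f ((k:ℝ) * x) := by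
        intro p hp
        obtain ⟨h1', h2'⟩ := Nat.ne_zero_of_mem_divisorsAntidiagonal hp
        have hpk : p.1 * p.2 = k := (Nat.mem_divisorsAntidiagonal.mp hp).1
        rw [hGdef]
        simp only []
        rw [if_neg (by push_neg; exact ⟨h1', h2'⟩), hpk]
      rw [Finset.sum_congr rfl hGval, ← Finset.sum_mul]
      congr 1
      rw [Nat.sum_divisorsAntidiagonal' (f := fun i j => b i * a j)]
      rw [← hconv k (Nat.one_le_iff_ne_zero.mpr hk)]
      exact Finset.sum_congr rfl fun d _ => mul_comm _ _
  rw [h1, h2, h3, tsum_congr hfib]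
  rw [tsum_eq_single 1 (fun k hk => by rw [if_neg hk, zero_mul])]
  norm_num

theorem stmt5 (a b : ℕ → ℂ)
    (ha : Summable fun n : ℕ => ‖a (n + 1)‖ / Real.sqrt (n + 1))
    (hb : Summable fun n : ℕ => ‖b (n + 1)‖ / Real.sqrt (n + 1))
    (hconv : ∀ n : ℕ, 1 ≤ n →
      (∑ d ∈ n.divisors, a d * b (n / d)) = if n = 1 then 1 else 0)
    (Ta Tb : Lp ℂ 2 ν →L[ℂ] Lp ℂ 2 ν)
    (hTa : ∀ (f : ℝ → ℂ) (hf : MemLp f 2 ν),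
      ∃ h2 : MemLp (Tfun a f) 2 ν, Ta (hf.toLp f) = h2.toLp (Tfun a f))
    (hTb : ∀ (f : ℝ → ℂ) (hf : MemLp f 2 ν),
      ∃ h2 : MemLp (Tfun b f) 2 ν, Tb (hf.toLp f) = h2.toLp (Tfun b f)) :
    ∀ u : Lp ℂ 2 ν, Tb (Ta u) = u := by
  intro u
  set f : ℝ → ℂ := ⇑u with hfdef
  have hf : MemLp f 2 ν := Lp.memLp u
  have hmf : Measurable f := (Lp.stronglyMeasurable u).measurable
  obtain ⟨h2, hTa2⟩ := hTa f hf
  obtain ⟨h3, hTb3⟩ := hTb (Tfun a f) h2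
  have hu : hf.toLp f = u := Lp.toLp_coeFn u hf
  have hkey : Tfun b (Tfun a f) =ᵐ[ν] f := by
    filter_upwards [ae_fin a b f hmf hf ha hb] with x hx
    exact pointwise_key a b f x hconv (ENNReal.tsum_coe_ne_top_iff_summable.mp hx)
  have : Tb (Ta u) = h3.toLp (Tfun b (Tfun a f)) := by
    rw [← hu, hTa2, hTb3]
  rw [this, ← hu]
  exact (MemLp.toLp_eq_toLp_iff h3 hf).mpr hkey
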